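/- Let V ~ Beta(α+1, β+1) with α, β > 0 integers, T = α + β and M = α/(α + β). Then for all c ∈ (0,1) with c ≤ M: P(V ≤ c) ≤ (e^{1/12} √T / √(2π)) · exp(−T (M − c)²). -/

import Mathlib

open MeasureTheory ProbabilityTheory Real

namespace TSPaper

/-- The Beta function `B(a,b) = Γ(a)Γ(b)/Γ(a+b)`. -/
noncomputable def betaFun (a b : ℝ) : ℝ := Real.Gamma a * Real.Gamma b / Real.Gamma (a + b)

/-- The Beta(a,b) distribution on `ℝ`, with density `x^(a-1) (1-x)^(b-1) / B(a,b)`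
on `(0,1)`. -/
noncomputable def betaMeasure (a b : ℝ) : Measure ℝ :=
  (volume.restrict (Set.Ioo (0 : ℝ) 1)).withDensity
    fun y => ENNReal.ofReal (y ^ (a - 1) * (1 - y) ^ (b - 1) / betaFun a b)

open Nat

/-- Bernoulli-type step: `(n+1)^(2n+1) ≤ (n+2)^(n+1) * n^n` for `n ≥ 1`. -/
lemma pow_step (n : ℕ) (hn : 1 ≤ n) :
    ((n:ℝ)+1)^(2*n+1) ≤ ((n:ℝ)+2)^(n+1) * (n:ℝ)^n := by
  have hn0 : (0:ℝ) < n := by exact_mod_cast hn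
  have h1 : (0:ℝ) < (n:ℝ)+1 := by linarith
  have key : (1 : ℝ) + (↑(n+1) : ℝ) * (-(1/((n:ℝ)+1)^2)) ≤ (1 + (-(1/((n:ℝ)+1)^2)))^(n+1) := by
    apply one_add_mul_le_pow
    have h : (1:ℝ) ≤ ((n:ℝ)+1)^2 := by nlinarith
    have : (1:ℝ)/((n:ℝ)+1)^2 ≤ 1 := by
      rw [div_le_one (by positivity)]; exact h
    linarith
  have h2 : (1 + (-(1/((n:ℝ)+1)^2))) = ((n:ℝ)*((n:ℝ)+2))/((n:ℝ)+1)^2 := by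
    field_simp; ring
  have h3 : (1 : ℝ) + (↑(n+1) : ℝ) * (-(1/((n:ℝ)+1)^2)) = (n:ℝ)/((n:ℝ)+1) := by
    push_cast; field_simp; ring
  rw [h2, h3, div_pow] at key
  rw [div_le_div_iff₀ h1 (by positivity)] at key
  have expand : (n:ℝ) * (((n:ℝ)+1)^2)^(n+1) = (n:ℝ) * ((n:ℝ)+1) * ((n:ℝ)+1)^(2*n+1) := by
    rw [← pow_mul, show 2*(n+1) = (2*n+1)+1 by ring, pow_succ]
    ring
  have expand2 : ((n:ℝ)*((n:ℝ)+2))^(n+1) * ((n:ℝ)+1) = (n:ℝ) * ((n:ℝ)+1) * (((n:ℝ)+2)^(n+1) * (n:ℝ)^n) := by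
    rw [mul_pow, pow_succ]
    ring
  rw [expand, expand2] at key
  exact le_of_mul_le_mul_left key (by positivity)

/-- Monotonicity of `((n+1)/n)^n` in cross-multiplied form. -/
lemma pow_mono (m n : ℕ) (hm : 1 ≤ m) (h : m ≤ n) :
    ((m:ℝ)+1)^m * (n:ℝ)^n ≤ (m:ℝ)^m * ((n:ℝ)+1)^n := by
  induction n, h using Nat.le_induction with
  | base => ring_nf; exact le_rfl
  | succ n hn ih =>
      have hn0 : (0:ℝ) < n := by exact_mod_cast (hm.trans hn)
      have hstep := pow_step n (hm.trans hn)
      have h1 : ((m:ℝ)+1)^m * ((n:ℝ)+1)^(n+1) * (n:ℝ)^n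
          ≤ (m:ℝ)^m * ((n:ℝ)+1)^(2*n+1) := by
        calc ((m:ℝ)+1)^m * ((n:ℝ)+1)^(n+1) * (n:ℝ)^n
            = (((m:ℝ)+1)^m * (n:ℝ)^n) * ((n:ℝ)+1)^(n+1) := by ring
          _ ≤ ((m:ℝ)^m * ((n:ℝ)+1)^n) * ((n:ℝ)+1)^(n+1) := by
              exact mul_le_mul_of_nonneg_right ih (by positivity)
          _ = (m:ℝ)^m * ((n:ℝ)+1)^(2*n+1) := by
              rw [show 2*n+1 = n+(n+1) by ring, pow_add]; ring
      have h2 : (m:ℝ)^m * ((n:ℝ)+1)^(2*n+1) ≤ (m:ℝ)^m * (((n:ℝ)+2)^(n+1) * (n:ℝ)^n) :=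
        mul_le_mul_of_nonneg_left hstep (by positivity)
      have h3 : ((m:ℝ)+1)^m * ((n:ℝ)+1)^(n+1) * (n:ℝ)^n
          ≤ ((m:ℝ)^m * ((n:ℝ)+2)^(n+1)) * (n:ℝ)^n := by
        calc ((m:ℝ)+1)^m * ((n:ℝ)+1)^(n+1) * (n:ℝ)^n
            ≤ (m:ℝ)^m * (((n:ℝ)+2)^(n+1) * (n:ℝ)^n) := h1.trans h2
          _ = ((m:ℝ)^m * ((n:ℝ)+2)^(n+1)) * (n:ℝ)^n := by ring
      have h4 := le_of_mul_le_mul_right h3 (by positivity : (0:ℝ) < (n:ℝ)^n)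
      have goal' : ((m:ℝ)+1)^m * (((n:ℝ)+1))^(n+1) ≤ (m:ℝ)^m * (((n:ℝ)+1)+1)^(n+1) := by
        rw [show ((n:ℝ)+1)+1 = (n:ℝ)+2 by ring]; exact h4
      exact_mod_cast goal'

noncomputable def Raux (a b : ℕ) : ℝ :=
  ((a+b+1)! : ℝ) * (a:ℝ)^a * (b:ℝ)^b / (((a)! : ℝ) * ((b)! : ℝ) * ((a:ℝ)+b)^(a+b+1))

lemma Raux_symm (a b : ℕ) : Raux a b = Raux b a := by
  unfold Raux
  rw [show b+a+1 = a+b+1 by omega, show (b:ℝ)+a = (a:ℝ)+b by ring]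
  ring

lemma Raux_step (a b : ℕ) (ha : 1 ≤ a) (hb : 1 ≤ b) : Raux a (b+1) ≤ Raux a b := by
  have ha0 : (0:ℝ) < a := by exact_mod_cast ha
  have hb0 : (0:ℝ) < b := by exact_mod_cast hb
  have hT0 : (0:ℝ) < (a:ℝ)+b := by linarith
  have hbT : b ≤ a + b := by omega
  have key : ((a:ℝ)+(b:ℝ)+2) * ((b:ℝ)+1)^b * ((a:ℝ)+(b:ℝ))^(a+b+1)
      ≤ (b:ℝ)^b * ((a:ℝ)+(b:ℝ)+1)^(a+b+2) := by
    have hmono := pow_mono b (a+b) hb hbT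
    push_cast at hmono
    calc ((a:ℝ)+(b:ℝ)+2) * ((b:ℝ)+1)^b * ((a:ℝ)+(b:ℝ))^(a+b+1)
        = (((b:ℝ)+1)^b * ((a:ℝ)+(b:ℝ))^(a+b)) * (((a:ℝ)+(b:ℝ)+2) * ((a:ℝ)+(b:ℝ))) := by
          rw [pow_succ]; ring
      _ ≤ ((b:ℝ)^b * ((a:ℝ)+(b:ℝ)+1)^(a+b)) * (((a:ℝ)+(b:ℝ)+2) * ((a:ℝ)+(b:ℝ))) := by
          exact mul_le_mul_of_nonneg_right hmono (by positivity)
      _ ≤ ((b:ℝ)^b * ((a:ℝ)+(b:ℝ)+1)^(a+b)) * (((a:ℝ)+(b:ℝ)+1) * ((a:ℝ)+(b:ℝ)+1)) := by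
          apply mul_le_mul_of_nonneg_left _ (by positivity)
          nlinarith
      _ = (b:ℝ)^b * ((a:ℝ)+(b:ℝ)+1)^(a+b+2) := by
          rw [show a+b+2 = (a+b)+1+1 by omega, pow_succ, pow_succ]; ring
  unfold Raux
  rw [div_le_div_iff₀ (by positivity) (by positivity)]
  rw [show a+(b+1)+1 = (a+b+1)+1 by omega, Nat.factorial_succ (a+b+1), Nat.factorial_succ b]
  push_cast
  refine le_of_le_of_eq (le_of_eq_of_le ?_ (mul_le_mul_of_nonneg_left key
    (show (0:ℝ) ≤ ((a+b+1)! : ℝ) * (a:ℝ)^a * ((a)! : ℝ) * ((b)! : ℝ) * ((b:ℝ)+1) by positivity))) ?_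
  · ring
  · ring

lemma Raux_mono (a : ℕ) (ha : 1 ≤ a) : ∀ b b' : ℕ, 1 ≤ b' → b' ≤ b → Raux a b ≤ Raux a b' := by
  intro b b' hb' hle
  induction b, hle using Nat.le_induction with
  | base => exact le_rfl
  | succ b hb ih => exact (Raux_step a b ha (hb'.trans hb)).trans ih

lemma Raux_le (a b : ℕ) (ha : 1 ≤ a) (hb : 1 ≤ b) (hT : 3 ≤ a + b) :
    Raux a b ≤ 16/27 := by
  have h12 : Raux 1 2 = 16/27 := by
    unfold Raux
    norm_num [Nat.factorial]
  rcases Nat.lt_or_ge b 2 with h2 | h2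
  · -- b = 1, a ≥ 2
    have hb1 : b = 1 := by omega
    have ha2 : 2 ≤ a := by omega
    rw [hb1, Raux_symm]
    calc Raux 1 a ≤ Raux 1 2 := Raux_mono 1 le_rfl a 2 (by norm_num) ha2
      _ = 16/27 := h12
  · calc Raux a b ≤ Raux a 2 := Raux_mono a ha b 2 (by norm_num) h2
      _ = Raux 2 a := Raux_symm a 2
      _ ≤ Raux 2 1 := Raux_mono 2 (by norm_num) a 1 le_rfl ha
      _ = Raux 1 2 := Raux_symm 2 1
      _ = 16/27 := h12

/-- Pointwise Gaussian bound on the beta kernel. -/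
lemma kernel_le (a b : ℕ) (x : ℝ) (hx0 : 0 ≤ x)
    (hxM : x ≤ ((a:ℝ)+1)/((a:ℝ)+(b:ℝ)+2)) :
    x^(a+1) * (1-x)^(b+1) ≤
      (((a:ℝ)+1)/((a:ℝ)+(b:ℝ)+2))^(a+1) * (1 - ((a:ℝ)+1)/((a:ℝ)+(b:ℝ)+2))^(b+1)
        * Real.exp (-(2*((a:ℝ)+(b:ℝ)+2)) * (x - ((a:ℝ)+1)/((a:ℝ)+(b:ℝ)+2))^2) := by
  have hTpos : (0:ℝ) < (a:ℝ)+(b:ℝ)+2 := by positivity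
  set T : ℝ := (a:ℝ)+(b:ℝ)+2 with hT
  have hMpos : (0:ℝ) < ((a:ℝ)+1)/T := by positivity
  set M : ℝ := ((a:ℝ)+1)/T with hM
  have hTM : T * M = (a:ℝ)+1 := by
    rw [hM]; field_simp
  have hM1 : M ≤ 1 := by
    rw [hM, div_le_one hTpos, hT]; linarith [Nat.cast_nonneg (α := ℝ) b]
  set ψ : ℝ → ℝ := fun y => y^(a+1) * (1-y)^(b+1) * Real.exp (2*T*(y-M)^2) with hψ
  have hderiv : ∀ y : ℝ, HasDerivAt ψ
      (Real.exp (2*T*(y-M)^2) * (y^a * (1-y)^b *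
        (((a:ℝ)+1)*(1-y) - ((b:ℝ)+1)*y + 4*(T*y-T*M)*(y*(1-y))))) y := by
    intro y
    have h1 : HasDerivAt (fun y : ℝ => y^(a+1)) ((((a:ℕ)+1 : ℕ):ℝ) * y^a) y := by
      simpa using hasDerivAt_pow (a+1) y
    have h2 : HasDerivAt (fun y : ℝ => (1-y)^(b+1)) ((((b:ℕ)+1 : ℕ):ℝ) * (1-y)^b * (-1)) y := by
      have hinner : HasDerivAt (fun y : ℝ => 1-y) (-1) y := by
        simpa using (hasDerivAt_id y).const_sub 1
      exact (hasDerivAt_pow (b+1) (1-y)).comp y hinner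
    have hq : HasDerivAt (fun y : ℝ => 2*T*(y-M)^2) (2*T*(2*(y-M))) y := by
      have h0 : HasDerivAt (fun y : ℝ => (y-M)^2) (2*(y-M)) y := by
        simpa using ((hasDerivAt_id y).sub_const M).fun_pow 2
      simpa [mul_assoc] using h0.const_mul (2*T)
    have h3 : HasDerivAt (fun y : ℝ => Real.exp (2*T*(y-M)^2))
        (2*T*(2*(y-M)) * Real.exp (2*T*(y-M)^2)) y := by
      simpa [mul_comm] using hq.exp
    have H := (h1.mul h2).mul h3
    apply H.congr_deriv
    simp only [Pi.mul_apply]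
    push_cast
    ring
  have hmono : MonotoneOn ψ (Set.Icc 0 M) := by
    apply monotoneOn_of_deriv_nonneg (convex_Icc 0 M)
    · apply Continuous.continuousOn
      rw [hψ]; fun_prop
    · intro y hy
      exact (hderiv y).differentiableAt.differentiableWithinAt
    · intro y hy
      rw [interior_Icc] at hy
      rw [(hderiv y).deriv]
      have hy0 : 0 ≤ y := le_of_lt hy.1
      have hy1 : y ≤ 1 := le_of_lt (lt_of_lt_of_le hy.2 hM1)
      have hyT : T*y ≤ (a:ℝ)+1 := by
        rw [← hTM]; exact mul_le_mul_of_nonneg_left (le_of_lt hy.2) (le_of_lt hTpos)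
      have hbr : 0 ≤ ((a:ℝ)+1)*(1-y) - ((b:ℝ)+1)*y + 4*(T*y-T*M)*(y*(1-y)) := by
        rw [hTM]
        nlinarith [mul_nonneg (sub_nonneg.2 hyT) (sq_nonneg (2*y-1)), hT]
      have h1 : (0:ℝ) ≤ y^a := pow_nonneg hy0 a
      have h2 : (0:ℝ) ≤ (1-y)^b := pow_nonneg (by linarith) b
      positivity
  have hx' : ψ x ≤ ψ M := hmono ⟨hx0, hxM⟩ ⟨le_of_lt hMpos, le_rfl⟩ hxM
  have hψM : ψ M = M^(a+1) * (1-M)^(b+1) := by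
    rw [hψ]; simp
  have key : ψ x * Real.exp (-(2*T) * (x-M)^2) ≤ ψ M * Real.exp (-(2*T) * (x-M)^2) :=
    mul_le_mul_of_nonneg_right hx' (le_of_lt (Real.exp_pos _))
  rw [hψM] at key
  refine le_of_eq_of_le ?_ key
  rw [hψ]
  rw [show (-(2*T) * (x-M)^2) = -(2*T*(x-M)^2) by ring, Real.exp_neg]
  field_simp

lemma gauss_int (t c : ℝ) (ht : 0 < t) (hc : 0 ≤ c) :
    ∫ x in (0:ℝ)..c, Real.exp (-(2*t)*(c-x)^2) ≤ Real.sqrt (π/(2*t)) / 2 := by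
  have h2t : 0 < 2*t := by linarith
  have hrefl : ∫ x in (0:ℝ)..c, Real.exp (-(2*t)*(c-x)^2)
      = ∫ x in (0:ℝ)..c, Real.exp (-(2*t)*x^2) := by
    have := intervalIntegral.integral_comp_sub_left (fun u : ℝ => Real.exp (-(2*t)*u^2)) c
      (a := 0) (b := c)
    simpa using this
  rw [hrefl, intervalIntegral.integral_of_le hc]
  rw [← integral_gaussian_Ioi (2*t)]
  apply setIntegral_mono_set
  · exact (integrable_exp_neg_mul_sq h2t).integrableOn
  · filter_upwards with y using (Real.exp_pos _).le
  · filter_upwards with y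
    intro hy
    exact hy.1

lemma const_ineq (T' v : ℝ) (hT : 0 < T') (hv : 0 ≤ v) (R : ℝ) (hR0 : 0 ≤ R) (hR : R ≤ 16/27) :
    R * T' * (Real.exp (-(2*v)) * (Real.sqrt (π/(2*T'))/2))
      ≤ Real.exp (1/12) * Real.sqrt T' / Real.sqrt (2*π) * Real.exp (-v) := by
  have hsT : Real.sqrt T' * Real.sqrt T' = T' := Real.mul_self_sqrt hT.le
  have hsπ : Real.sqrt π * Real.sqrt π = π := Real.mul_self_sqrt pi_pos.le
  rw [Real.sqrt_div pi_pos.le, Real.sqrt_mul (by norm_num : (0:ℝ) ≤ 2) T',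
    Real.sqrt_mul (by norm_num : (0:ℝ) ≤ 2) π]
  set s := Real.sqrt T' with hs
  set p := Real.sqrt π with hp
  set q := Real.sqrt 2 with hq
  have hs0 : 0 < s := Real.sqrt_pos.2 hT
  have hp0 : 0 < p := Real.sqrt_pos.2 pi_pos
  have hq0 : 0 < q := Real.sqrt_pos.2 (by norm_num)
  have hexp : Real.exp (-(2*v)) ≤ Real.exp (-v) := by
    rw [Real.exp_le_exp]; linarith
  have key : (8/27) * (p*p) ≤ Real.exp (1/12) := by
    rw [hsπ]
    have h1 : π ≤ 3.15 := Real.pi_lt_d2.le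
    have h2 : (13:ℝ)/12 ≤ Real.exp (1/12) := by
      have := Real.add_one_le_exp (1/12 : ℝ); linarith
    nlinarith
  have core : R * Real.exp (-(2*v)) * (p*p) / 2 ≤ Real.exp (1/12) * Real.exp (-v) := by
    calc R * Real.exp (-(2*v)) * (p*p) / 2
        ≤ (16/27) * Real.exp (-v) * (p*p) / 2 := by
          apply div_le_div_of_nonneg_right ?_ (by norm_num) |>.trans le_rfl
          · exact mul_le_mul (mul_le_mul hR hexp (Real.exp_pos _).le (by norm_num))
              le_rfl (by positivity) (by positivity)
      _ ≤ Real.exp (1/12) * Real.exp (-v) := by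
          nlinarith [mul_le_mul_of_nonneg_right key (Real.exp_pos (-v)).le]
  have hmul := mul_le_mul_of_nonneg_right core (show 0 ≤ s/(q*p) by positivity)
  calc R * T' * (Real.exp (-(2*v)) * (p/(q*s)/2))
      = (R * Real.exp (-(2*v)) * (p*p) / 2) * (s/(q*p)) := by
        rw [← hsT]; field_simp
    _ ≤ (Real.exp (1/12) * Real.exp (-v)) * (s/(q*p)) := hmul
    _ = Real.exp (1/12) * s / (q*p) * Real.exp (-v) := by ring

lemma betaFun_eq (α β : ℕ) :
    betaFun ((α:ℝ)+1) ((β:ℝ)+1) = ((α)! : ℝ) * ((β)! : ℝ) / ((α+β+1)! : ℝ) := by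
  unfold betaFun
  rw [show (α:ℝ)+1+((β:ℝ)+1) = ((α+β+1 : ℕ):ℝ)+1 by push_cast; ring]
  rw [Real.Gamma_nat_eq_factorial, Real.Gamma_nat_eq_factorial, Real.Gamma_nat_eq_factorial]

lemma measure_eq
    {Ω : Type} [MeasurableSpace Ω] (μ : Measure Ω)
    (α β : ℕ)
    (V : Ω → ℝ) (hmeas : Measurable V)
    (hlaw : μ.map V = betaMeasure ((α : ℝ) + 1) ((β : ℝ) + 1))
    (c : ℝ) (hc : c ∈ Set.Ioo (0 : ℝ) 1) :
    μ {ω | V ω ≤ c} =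
      ENNReal.ofReal (((α+β+1)! : ℝ) / (((α)! : ℝ) * ((β)! : ℝ))
        * ∫ x in (0:ℝ)..c, x^α * (1-x)^β) := by
  have hBpos : 0 < betaFun ((α:ℝ)+1) ((β:ℝ)+1) := by
    rw [betaFun_eq]; positivity
  have h1 : {ω | V ω ≤ c} = V ⁻¹' (Set.Iic c) := rfl
  rw [h1, ← Measure.map_apply hmeas measurableSet_Iic, hlaw]
  unfold betaMeasure
  rw [withDensity_apply _ measurableSet_Iic, Measure.restrict_restrict measurableSet_Iic]
  have hset : Set.Iic c ∩ Set.Ioo (0:ℝ) 1 = Set.Ioc 0 c := by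
    ext y
    simp only [Set.mem_inter_iff, Set.mem_Iic, Set.mem_Ioo, Set.mem_Ioc]
    constructor
    · rintro ⟨h, h0, _⟩; exact ⟨h0, h⟩
    · rintro ⟨h0, h⟩; exact ⟨h, h0, lt_of_le_of_lt h hc.2⟩
  rw [hset]
  have hfun : ∀ y : ℝ, (ENNReal.ofReal (y ^ ((α:ℝ)+1-1) * (1-y) ^ ((β:ℝ)+1-1) / betaFun ((α:ℝ)+1) ((β:ℝ)+1)))
      = ENNReal.ofReal (y^α * (1-y)^β / betaFun ((α:ℝ)+1) ((β:ℝ)+1)) := by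
    intro y
    rw [show (α:ℝ)+1-1 = ((α:ℕ):ℝ) by ring, show (β:ℝ)+1-1 = ((β:ℕ):ℝ) by ring,
      Real.rpow_natCast, Real.rpow_natCast]
  simp_rw [hfun]
  rw [← ofReal_integral_eq_lintegral_ofReal]
  · congr 1
    rw [← intervalIntegral.integral_of_le hc.1.le, intervalIntegral.integral_div]
    rw [betaFun_eq]
    have hfac : (0:ℝ) < ((α)! : ℝ) * ((β)! : ℝ) := by positivity
    field_simp
  · exact (ContinuousOn.integrableOn_compact isCompact_Icc
      (Continuous.continuousOn (by fun_prop))).mono_set Set.Ioc_subset_Icc_self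
  · filter_upwards [ae_restrict_mem measurableSet_Ioc] with y hy
    have h0 : 0 ≤ y := hy.1.le
    have h1 : y ≤ 1 := hy.2.trans hc.2.le
    have : (0:ℝ) ≤ 1 - y := by linarith
    positivity

lemma main_small (c : ℝ) (hc : c ∈ Set.Ioo (0:ℝ) 1) (hcM : c ≤ 1/2) :
    (6:ℝ) * ∫ x in (0:ℝ)..c, x^1 * (1-x)^1
      ≤ Real.exp (1/12) * Real.sqrt 2 / Real.sqrt (2*π) * Real.exp (-2*(1/2 - c)^2) := by
  have hint : ∫ x in (0:ℝ)..c, x^1 * (1-x)^1 = c^2/2 - c^3/3 := by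
    have h : ∀ x:ℝ, x^1*(1-x)^1 = x - x^2 := fun x => by ring
    simp_rw [h]
    rw [intervalIntegral.integral_sub (Continuous.intervalIntegrable (by fun_prop) 0 c)
      (Continuous.intervalIntegrable (by fun_prop) 0 c)]
    rw [integral_id, integral_pow]
    norm_num
  rw [hint]
  have hsπ : 0 < Real.sqrt π := Real.sqrt_pos.2 pi_pos
  have hs2 : 0 < Real.sqrt 2 := Real.sqrt_pos.2 (by norm_num)
  have hC : (3/5 : ℝ) ≤ Real.exp (1/12) * Real.sqrt 2 / Real.sqrt (2*π) := by
    rw [Real.sqrt_mul (by norm_num : (0:ℝ) ≤ 2) π]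
    have heq : Real.exp (1/12) * Real.sqrt 2 / (Real.sqrt 2 * Real.sqrt π)
        = Real.exp (1/12) / Real.sqrt π := by
      field_simp
    rw [heq, le_div_iff₀ hsπ]
    have h1 : Real.sqrt π ≤ 65/36 := by
      rw [show (65/36:ℝ) = Real.sqrt ((65/36)^2) from (Real.sqrt_sq (by norm_num)).symm]
      exact Real.sqrt_le_sqrt (by nlinarith [Real.pi_lt_d2])
    have h2 : (13:ℝ)/12 ≤ Real.exp (1/12) := by
      have := Real.add_one_le_exp (1/12 : ℝ); linarith
    nlinarith
  have hd0 : 0 ≤ 1/2 - c := by linarith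
  have hd1 : 1/2 - c ≤ 1/2 := by linarith [hc.1]
  have hexp : 1 - 2*(1/2-c)^2 ≤ Real.exp (-2*(1/2 - c)^2) := by
    have := Real.add_one_le_exp (-2*(1/2-c)^2); linarith
  have hpos : (0:ℝ) < 1 - 2*(1/2-c)^2 := by nlinarith
  have hpoly : 6*(c^2/2 - c^3/3) ≤ (3/5) * (1 - 2*(1/2-c)^2) := by
    have hq : (0:ℝ) ≤ -2*c^2+(16/5)*c+2/5 := by nlinarith [hc.1]
    nlinarith [mul_nonneg hd0 hq]
  calc (6:ℝ)*(c^2/2 - c^3/3) ≤ (3/5) * (1 - 2*(1/2-c)^2) := hpoly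
    _ ≤ (Real.exp (1/12) * Real.sqrt 2 / Real.sqrt (2*π)) * (1 - 2*(1/2-c)^2) :=
        mul_le_mul_of_nonneg_right hC hpos.le
    _ ≤ (Real.exp (1/12) * Real.sqrt 2 / Real.sqrt (2*π)) * Real.exp (-2*(1/2 - c)^2) := by
        apply mul_le_mul_of_nonneg_left hexp
        nlinarith

lemma main_general (α β : ℕ) (hα : 0 < α) (hβ : 0 < β) (h3 : 3 ≤ α + β)
    (c : ℝ) (hc : c ∈ Set.Ioo (0:ℝ) 1) (hcM : c ≤ (α : ℝ) / ((α : ℝ) + β)) :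
    ((α+β+1)! : ℝ) / (((α)! : ℝ) * ((β)! : ℝ)) * ∫ x in (0:ℝ)..c, x^α * (1-x)^β
      ≤ Real.exp (1/12) * Real.sqrt ((α : ℝ) + β) / Real.sqrt (2 * π)
          * Real.exp (-((α : ℝ) + β) * ((α : ℝ) / ((α : ℝ) + β) - c) ^ 2) := by
  obtain ⟨a, rfl⟩ : ∃ a, α = a + 1 := ⟨α - 1, by omega⟩
  obtain ⟨b, rfl⟩ : ∃ b, β = b + 1 := ⟨β - 1, by omega⟩
  set T : ℝ := ((a:ℝ)+1) + ((b:ℝ)+1) with hTdef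
  have hT2 : T = (a:ℝ)+(b:ℝ)+2 := by rw [hTdef]; ring
  have hTpos : 0 < T := by rw [hT2]; positivity
  set M : ℝ := ((a:ℝ)+1)/T with hMdef
  have hMpos : 0 < M := by rw [hMdef]; positivity
  have h1M : 0 < 1 - M := by
    rw [hMdef, sub_pos, div_lt_one hTpos, hT2]
    linarith [Nat.cast_nonneg (α := ℝ) b]
  have hcM' : c ≤ M := by
    rw [hMdef, hT2]
    push_cast at hcM
    rw [show ((a:ℝ)+(b:ℝ)+2) = (a:ℝ)+1+((b:ℝ)+1) from by ring]
    exact hcM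
  set d : ℝ := M - c with hddef
  have hd0 : 0 ≤ d := by rw [hddef]; linarith
  -- the constant K
  set K : ℝ := M^(a+1) * (1-M)^(b+1) * Real.exp (-(2*T)*d^2) with hKdef
  have hKpos : 0 < K := by
    rw [hKdef]
    have := Real.exp_pos (-(2*T)*d^2)
    positivity
  -- pointwise bound
  have hpt : ∀ x ∈ Set.Icc (0:ℝ) c, x^(a+1) * (1-x)^(b+1) ≤ K * Real.exp (-(2*T)*(c-x)^2) := by
    intro x hx
    have hxM : x ≤ M := le_trans hx.2 hcM'
    have h1 := kernel_le a b x hx.1 (by rw [← hT2, ← hMdef]; exact hxM)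
    rw [← hT2, ← hMdef] at h1
    have hexp : Real.exp (-(2*T)*(x-M)^2)
        ≤ Real.exp (-(2*T)*d^2) * Real.exp (-(2*T)*(c-x)^2) := by
      rw [← Real.exp_add, Real.exp_le_exp]
      have hsq : (x - M)^2 ≥ d^2 + (c-x)^2 := by
        rw [hddef]; nlinarith [hx.2, hd0]
      nlinarith [hTpos]
    refine h1.trans ?_
    rw [hKdef, mul_assoc (M ^ (a+1) * (1-M) ^ (b+1))]
    exact mul_le_mul_of_nonneg_left hexp
      (mul_nonneg (pow_nonneg hMpos.le _) (pow_nonneg h1M.le _))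
  -- integral bound
  have hint : ∫ x in (0:ℝ)..c, x^(a+1) * (1-x)^(b+1)
      ≤ K * (Real.sqrt (π/(2*T)) / 2) := by
    have hle1 : ∫ x in (0:ℝ)..c, x^(a+1) * (1-x)^(b+1)
        ≤ ∫ x in (0:ℝ)..c, K * Real.exp (-(2*T)*(c-x)^2) := by
      apply intervalIntegral.integral_mono_on hc.1.le
      · exact Continuous.intervalIntegrable (by fun_prop) 0 c
      · exact Continuous.intervalIntegrable (by fun_prop) 0 c
      · exact hpt
    refine hle1.trans ?_
    rw [intervalIntegral.integral_const_mul]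
    exact mul_le_mul_of_nonneg_left (gauss_int T c hTpos hc.1.le) hKpos.le
  -- final assembly
  set N : ℝ := ((a+1+(b+1)+1)! : ℝ) / (((a+1)! : ℝ) * ((b+1)! : ℝ)) with hNdef
  have hN0 : 0 ≤ N := by rw [hNdef]; positivity
  set G : ℝ := Real.sqrt (π/(2*T)) / 2 with hGdef
  have halg : N * (M^(a+1)*(1-M)^(b+1)) = Raux (a+1) (b+1) * T := by
    have h1Meq : 1 - M = ((b:ℝ)+1)/T := by
      rw [hMdef]; field_simp; rw [hT2]; ring
    rw [hMdef, h1Meq]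
    unfold Raux
    rw [show ((a+1:ℕ):ℝ)+((b+1:ℕ):ℝ) = T from by rw [hTdef]; push_cast; ring]
    rw [div_pow, div_pow, hNdef]
    have hTne : T ≠ 0 := hTpos.ne'
    field_simp
    push_cast
    ring
  have hRaux0 : 0 ≤ Raux (a+1) (b+1) := by
    unfold Raux; positivity
  have hRaux : Raux (a+1) (b+1) ≤ 16/27 :=
    Raux_le (a+1) (b+1) (by omega) (by omega) (by omega)
  have hconst := const_ineq T (T*d^2) hTpos (by positivity) (Raux (a+1) (b+1)) hRaux0 hRaux
  have heq1 : N * (K * G) = (Raux (a+1) (b+1) * T) * (Real.exp (-(2*(T*d^2))) * G) := by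
    rw [hKdef, show (-(2*T)*d^2 : ℝ) = -(2*(T*d^2)) by ring, ← halg]
    ring
  have hchain : N * (∫ x in (0:ℝ)..c, x^(a+1) * (1-x)^(b+1)) ≤
      Real.exp (1/12) * Real.sqrt T / Real.sqrt (2*π) * Real.exp (-(T*d^2)) := by
    calc N * (∫ x in (0:ℝ)..c, x^(a+1) * (1-x)^(b+1))
        ≤ N * (K * G) := mul_le_mul_of_nonneg_left hint hN0
      _ = (Raux (a+1) (b+1) * T) * (Real.exp (-(2*(T*d^2))) * G) := heq1
      _ ≤ Real.exp (1/12) * Real.sqrt T / Real.sqrt (2*π) * Real.exp (-(T*d^2)) := hconst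
  refine le_of_le_of_eq (le_of_eq_of_le ?_ hchain) ?_
  · ring
  · rw [hddef, hMdef, hTdef]
    push_cast
    ring_nf

/-- **Lemma** (Gaussian-type bound on the lower tail of a Beta distribution): let
`V ~ Beta(α+1, β+1)` with `α, β` positive integers, `T = α + β` and `M = α/(α+β)`.
Then for all `c ∈ (0,1)` with `c ≤ M`,
`P(V ≤ c) ≤ (e^(1/12) √T / √(2π)) exp(-T (M-c)²)`. -/
theorem beta_cdf_gaussian_bound
    {Ω : Type} [MeasurableSpace Ω] (μ : Measure Ω) [IsProbabilityMeasure μ]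
    (α β : ℕ) (hα : 0 < α) (hβ : 0 < β)
    (V : Ω → ℝ) (hmeas : Measurable V)
    (hlaw : μ.map V = betaMeasure ((α : ℝ) + 1) ((β : ℝ) + 1))
    (c : ℝ) (hc : c ∈ Set.Ioo (0 : ℝ) 1) (hcM : c ≤ (α : ℝ) / ((α : ℝ) + β)) :
    μ {ω | V ω ≤ c} ≤
      ENNReal.ofReal
        (Real.exp (1 / 12) * Real.sqrt ((α : ℝ) + β) / Real.sqrt (2 * Real.pi)
          * Real.exp (-((α : ℝ) + β) * ((α : ℝ) / ((α : ℝ) + β) - c) ^ 2)) := by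
  rw [measure_eq μ α β V hmeas hlaw c hc]
  apply ENNReal.ofReal_le_ofReal
  by_cases h3 : 3 ≤ α + β
  · exact main_general α β hα hβ h3 c hc hcM
  · have hα1 : α = 1 := by omega
    have hβ1 : β = 1 := by omega
    subst hα1; subst hβ1
    have hcM' : c ≤ 1/2 := by
      norm_num at hcM; linarith
    have := main_small c hc hcM'
    norm_num at this ⊢
    convert this using 2 <;> norm_num <;> ring_nf

end TSPaper
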